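/- Let $n_1, n_2, n_3$ be integers greater than 1, and let $\partial_1$ be the $2\times 6$ integer matrix $\begin{bmatrix} 1 & -2n_1 & 1 & -2n_2 & 1 & -2n_3 \\ -2n_1 & 1 & -2n_2 & 1 & -2n_3 & 1\end{bmatrix}$. Then the gcd of all $2\times 2$ minors of $\partial_1$ equals $g = \gcd(1-4n_1^2,\ 1-4n_2^2,\ 1-4n_3^2,\ 1-4n_1n_2,\ 1-4n_1n_3,\ 1-4n_2n_3)$. -/

import Mathlib

set_option maxHeartbeats 1000000 in
open Finset in
theorem stmt_10 (n₁ n₂ n₃ : ℤ) (h₁ : 1 < n₁) (h₂ : 1 < n₂) (h₃ : 1 < n₃)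
    (M : Matrix (Fin 2) (Fin 6) ℤ)
    (hM : M = !![1, -2*n₁, 1, -2*n₂, 1, -2*n₃;
                 -2*n₁, 1, -2*n₂, 1, -2*n₃, 1]) :
    Finset.univ.gcd (fun p : Fin 6 × Fin 6 => M 0 p.1 * M 1 p.2 - M 0 p.2 * M 1 p.1) =
    (Int.gcd (1 - 4*n₁^2) (Int.gcd (1 - 4*n₂^2) (Int.gcd (1 - 4*n₃^2)
      (Int.gcd (1 - 4*n₁*n₂) (Int.gcd (1 - 4*n₁*n₃) (1 - 4*n₂*n₃))))) : ℤ) := by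
  subst hM
  set f : Fin 6 × Fin 6 → ℤ := fun p =>
    (!![1, -2*n₁, 1, -2*n₂, 1, -2*n₃; -2*n₁, 1, -2*n₂, 1, -2*n₃, 1] : Matrix (Fin 2) (Fin 6) ℤ)
      0 p.1 *
    (!![1, -2*n₁, 1, -2*n₂, 1, -2*n₃; -2*n₁, 1, -2*n₂, 1, -2*n₃, 1] : Matrix (Fin 2) (Fin 6) ℤ)
      1 p.2 -
    (!![1, -2*n₁, 1, -2*n₂, 1, -2*n₃; -2*n₁, 1, -2*n₂, 1, -2*n₃, 1] : Matrix (Fin 2) (Fin 6) ℤ)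
      0 p.2 *
    (!![1, -2*n₁, 1, -2*n₂, 1, -2*n₃; -2*n₁, 1, -2*n₂, 1, -2*n₃, 1] : Matrix (Fin 2) (Fin 6) ℤ)
      1 p.1 with hf
  set g : ℤ := (Int.gcd (1 - 4*n₁^2) (Int.gcd (1 - 4*n₂^2) (Int.gcd (1 - 4*n₃^2)
      (Int.gcd (1 - 4*n₁*n₂) (Int.gcd (1 - 4*n₁*n₃) (1 - 4*n₂*n₃))))) : ℤ) with hgdef
  -- g divides the six generators
  have hd1 : g ∣ 1 - 4*n₁^2 := Int.gcd_dvd_left _ _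
  have hr1 : g ∣ (Int.gcd (1 - 4*n₂^2) (Int.gcd (1 - 4*n₃^2)
      (Int.gcd (1 - 4*n₁*n₂) (Int.gcd (1 - 4*n₁*n₃) (1 - 4*n₂*n₃)))) : ℤ) := Int.gcd_dvd_right _ _
  have hd2 : g ∣ 1 - 4*n₂^2 := hr1.trans (Int.gcd_dvd_left _ _)
  have hr2 : g ∣ (Int.gcd (1 - 4*n₃^2)
      (Int.gcd (1 - 4*n₁*n₂) (Int.gcd (1 - 4*n₁*n₃) (1 - 4*n₂*n₃))) : ℤ) :=
    hr1.trans (Int.gcd_dvd_right _ _)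
  have hd3 : g ∣ 1 - 4*n₃^2 := hr2.trans (Int.gcd_dvd_left _ _)
  have hr3 : g ∣ (Int.gcd (1 - 4*n₁*n₂) (Int.gcd (1 - 4*n₁*n₃) (1 - 4*n₂*n₃)) : ℤ) :=
    hr2.trans (Int.gcd_dvd_right _ _)
  have he12 : g ∣ 1 - 4*n₁*n₂ := hr3.trans (Int.gcd_dvd_left _ _)
  have hr4 : g ∣ (Int.gcd (1 - 4*n₁*n₃) (1 - 4*n₂*n₃) : ℤ) := hr3.trans (Int.gcd_dvd_right _ _)
  have he13 : g ∣ 1 - 4*n₁*n₃ := hr4.trans (Int.gcd_dvd_left _ _)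
  have he23 : g ∣ 1 - 4*n₂*n₃ := hr4.trans (Int.gcd_dvd_right _ _)
  -- g divides the differences
  have hdd12 : g ∣ n₁ - n₂ := by
    obtain ⟨a, ha⟩ := hd1; obtain ⟨b, hb⟩ := he12
    exact ⟨-n₂*a + n₁*b, by linear_combination (-n₂)*ha + n₁*hb⟩
  have hdd13 : g ∣ n₁ - n₃ := by
    obtain ⟨a, ha⟩ := hd1; obtain ⟨b, hb⟩ := he13
    exact ⟨-n₃*a + n₁*b, by linear_combination (-n₃)*ha + n₁*hb⟩
  have hdd23 : g ∣ n₂ - n₃ := by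
    obtain ⟨a, ha⟩ := hd2; obtain ⟨b, hb⟩ := he23
    exact ⟨-n₃*a + n₂*b, by linear_combination (-n₃)*ha + n₂*hb⟩
  -- g divides every minor
  have hgdvd : g ∣ Finset.univ.gcd f := by
    apply Finset.dvd_gcd
    intro p _
    fin_cases p <;> simp [hf, show (5:Fin 6) = (4:Fin 5).succ from rfl, Matrix.cons_val_succ, Matrix.cons_val_succ', Matrix.cons_val_zero'] <;> ring_nf <;>
      first
      | (refine Dvd.dvd.trans hd1 ⟨1, ?_⟩; ring1)
      | (refine Dvd.dvd.trans hd1 ⟨-1, ?_⟩; ring1)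
      | (refine Dvd.dvd.trans hd2 ⟨1, ?_⟩; ring1)
      | (refine Dvd.dvd.trans hd2 ⟨-1, ?_⟩; ring1)
      | (refine Dvd.dvd.trans hd3 ⟨1, ?_⟩; ring1)
      | (refine Dvd.dvd.trans hd3 ⟨-1, ?_⟩; ring1)
      | (refine Dvd.dvd.trans he12 ⟨1, ?_⟩; ring1)
      | (refine Dvd.dvd.trans he12 ⟨-1, ?_⟩; ring1)
      | (refine Dvd.dvd.trans he13 ⟨1, ?_⟩; ring1)
      | (refine Dvd.dvd.trans he13 ⟨-1, ?_⟩; ring1)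
      | (refine Dvd.dvd.trans he23 ⟨1, ?_⟩; ring1)
      | (refine Dvd.dvd.trans he23 ⟨-1, ?_⟩; ring1)
      | (refine Dvd.dvd.trans hdd12 ⟨2, ?_⟩; ring1)
      | (refine Dvd.dvd.trans hdd12 ⟨-2, ?_⟩; ring1)
      | (refine Dvd.dvd.trans hdd13 ⟨2, ?_⟩; ring1)
      | (refine Dvd.dvd.trans hdd13 ⟨-2, ?_⟩; ring1)
      | (refine Dvd.dvd.trans hdd23 ⟨2, ?_⟩; ring1)
      | (refine Dvd.dvd.trans hdd23 ⟨-2, ?_⟩; ring1)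
  -- the big gcd divides every generator
  have key : ∀ p : Fin 6 × Fin 6, Finset.univ.gcd f ∣ f p := fun p =>
    Finset.gcd_dvd (Finset.mem_univ p)
  set G : ℤ := Finset.univ.gcd f with hG
  have kk : ∀ (p : Fin 6 × Fin 6) (v : ℤ), (f p = v ∨ f p = -v) → G ∣ v := by
    rintro p v (h | h)
    · exact h ▸ key p
    · have := key p
      rw [h] at this
      exact (dvd_neg.mp this)
  have k01 : G ∣ 1 - 4*n₁^2 := by
    refine kk (0, 1) _ (Or.inl ?_)
    simp [hf, show (5:Fin 6) = (4:Fin 5).succ from rfl, Matrix.cons_val_succ]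
    ring
  have k23 : G ∣ 1 - 4*n₂^2 := by
    refine kk (2, 3) _ (Or.inl ?_)
    simp [hf, show (5:Fin 6) = (4:Fin 5).succ from rfl, Matrix.cons_val_succ]
    ring
  have k45 : G ∣ 1 - 4*n₃^2 := by
    refine kk (4, 5) _ (Or.inl ?_)
    simp [hf, show (5:Fin 6) = (4:Fin 5).succ from rfl, Matrix.cons_val_succ]
    ring
  have k03 : G ∣ 1 - 4*n₁*n₂ := by
    refine kk (0, 3) _ (Or.inl ?_)
    simp [hf, show (5:Fin 6) = (4:Fin 5).succ from rfl, Matrix.cons_val_succ]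
    ring
  have k05 : G ∣ 1 - 4*n₁*n₃ := by
    refine kk (0, 5) _ (Or.inl ?_)
    simp [hf, show (5:Fin 6) = (4:Fin 5).succ from rfl, Matrix.cons_val_succ]
    ring
  have k25 : G ∣ 1 - 4*n₂*n₃ := by
    refine kk (2, 5) _ (Or.inl ?_)
    simp [hf, show (5:Fin 6) = (4:Fin 5).succ from rfl, Matrix.cons_val_succ]
    ring
  have hGdvd : G ∣ g := by
    refine Int.dvd_coe_gcd k01 (Int.dvd_coe_gcd k23 (Int.dvd_coe_gcd k45 (Int.dvd_coe_gcd k03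
      (Int.dvd_coe_gcd k05 k25))))
  have hGnn : 0 ≤ G := Int.nonneg_of_normalize_eq_self (Finset.normalize_gcd)
  have hgnn : 0 ≤ g := Int.ofNat_nonneg _
  exact Int.dvd_antisymm hGnn hgnn hGdvd hgdvd
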